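/- Let χ < 0 and χ_1,...,χ_n < 0 be integers with χ = Σ_{j=1}^n χ_j - (n-1)m for a positive integer m. Then there exist rational numbers w_1,...,w_n with 0 < w_j < 1 and Σ w_j = 1 such that for each i = 1,...,n-1: (Σ_{j=1}^i w_j)χ - Σ_{j=1}^{i-1} χ_j + m(i-1) ≤ χ_i ≤ (Σ_{j=1}^i w_j)χ - Σ_{j=1}^{i-1} χ_j + mi. -/
import Mathlib

lemma sum_Iic_fin {M : Type*} [AddCommMonoid M] {n : ℕ} (g : ℕ → M) (i : Fin n) :
    ∑ j ∈ Finset.Iic i, g j.val = ∑ k ∈ Finset.range (i.val + 1), g k := by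
  have h : (Finset.Iic i).map Fin.valEmbedding = Finset.range (i.val + 1) := by
    ext a
    simp only [Finset.mem_map, Finset.mem_Iic, Fin.valEmbedding_apply, Finset.mem_range,
      Nat.lt_succ_iff]
    constructor
    · rintro ⟨j, hj, rfl⟩; exact hj
    · intro ha; exact ⟨⟨a, lt_of_le_of_lt ha i.isLt⟩, ha, rfl⟩
  calc ∑ j ∈ Finset.Iic i, g j.val
      = ∑ x ∈ (Finset.Iic i).map Fin.valEmbedding, g x := (Finset.sum_map _ Fin.valEmbedding g).symm
    _ = _ := by rw [h]

lemma sum_Iio_fin {M : Type*} [AddCommMonoid M] {n : ℕ} (g : ℕ → M) (i : Fin n) :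
    ∑ j ∈ Finset.Iio i, g j.val = ∑ k ∈ Finset.range i.val, g k := by
  have h : (Finset.Iio i).map Fin.valEmbedding = Finset.range i.val := by
    ext a
    simp only [Finset.mem_map, Finset.mem_Iio, Fin.valEmbedding_apply, Finset.mem_range]
    constructor
    · rintro ⟨j, hj, rfl⟩; exact hj
    · intro ha; exact ⟨⟨a, lt_trans ha i.isLt⟩, ha, rfl⟩
  calc ∑ j ∈ Finset.Iio i, g j.val
      = ∑ x ∈ (Finset.Iio i).map Fin.valEmbedding, g x := (Finset.sum_map _ Fin.valEmbedding g).symm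
    _ = _ := by rw [h]

lemma div_lt_div_of_neg' {a b c : ℚ} (hc : c < 0) (h : b < a) : a / c < b / c := by
  rw [div_eq_mul_inv, div_eq_mul_inv]
  exact mul_lt_mul_of_neg_right h (inv_lt_zero.mpr hc)

/-!
STATEMENT 8 (existence of a polarization).
-/
theorem exists_polarization
    (n : ℕ) (hn : 2 ≤ n) (m : ℕ) (hm : 0 < m)
    (chi : ℤ) (hchi : chi < 0)
    (chiJ : Fin n → ℤ) (hchiJ : ∀ j, chiJ j < 0)
    (hrel : chi = (∑ j, chiJ j) - ((n : ℤ) - 1) * m) :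
    ∃ w : Fin n → ℚ,
      (∀ j, 0 < w j ∧ w j < 1) ∧ (∑ j, w j) = 1 ∧
      ∀ i : Fin n, (i : ℕ) < n - 1 →
        ((∑ j ∈ Finset.Iic i, w j) * (chi : ℚ) - (∑ j ∈ Finset.Iio i, (chiJ j : ℚ))
            + (m : ℚ) * ((i : ℕ) : ℚ) ≤ (chiJ i : ℚ)) ∧
        ((chiJ i : ℚ) ≤ (∑ j ∈ Finset.Iic i, w j) * (chi : ℚ)
            - (∑ j ∈ Finset.Iio i, (chiJ j : ℚ)) + (m : ℚ) * (((i : ℕ) : ℚ) + 1)) := by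
  have hchiq : (chi : ℚ) < 0 := by exact_mod_cast hchi
  have hchiq0 : (chi : ℚ) ≠ 0 := ne_of_lt hchiq
  -- extend chiJ to ℕ
  set c : ℕ → ℤ := fun j => if h : j < n then chiJ ⟨j, h⟩ else -1 with hc_def
  have hc : ∀ j, c j < 0 := by
    intro j
    by_cases h : j < n
    · simp only [hc_def, dif_pos h]; exact hchiJ _
    · simp only [hc_def, dif_neg h]; norm_num
  have hc' : ∀ j : Fin n, c j.val = chiJ j := by
    intro j
    simp only [hc_def, dif_pos j.isLt]
  set Q : ℕ → ℤ := fun k => ∑ j ∈ Finset.range k, c j with hQ_def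
  have hrelQ : chi = Q n - ((n : ℤ) - 1) * m := by
    rw [hrel]
    congr 1
    have : ∑ j : Fin n, chiJ j = ∑ k ∈ Finset.range n, c k := by
      rw [← Fin.sum_univ_eq_sum_range (fun k => c k) n]
      exact Finset.sum_congr rfl (fun j _ => (hc' j).symm)
    exact this
  set num : ℕ → ℤ := fun k => if k = n then chi else Q k - m * k with hnum_def
  set S : ℕ → ℚ := fun k => (num k : ℚ) / (chi : ℚ) with hS_def
  have hS0 : S 0 = 0 := by
    simp only [hS_def, hnum_def, hQ_def]
    rw [if_neg (by omega)]
    simp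
  have hSn : S n = 1 := by
    simp only [hS_def, hnum_def, if_pos rfl]
    exact div_self hchiq0
  -- num is strictly decreasing up to n
  have hnumlt : ∀ k, k < n → num (k + 1) < num k := by
    intro k hk
    have hQs : Q (k + 1) = Q k + c k := Finset.sum_range_succ c k
    by_cases h : k + 1 = n
    · have hkn : k = n - 1 := by omega
      simp only [hnum_def, if_pos h, if_neg (by omega : k ≠ n)]
      rw [hrelQ, ← h, hQs]
      have := hc k
      push_cast
      nlinarith [hc k]
    · simp only [hnum_def, if_neg h, if_neg (by omega : k ≠ n)]
      rw [hQs]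
      have h1 := hc k
      have h2 : (0 : ℤ) < m := by exact_mod_cast hm
      push_cast
      nlinarith
  have hstep : ∀ k, k < n → S k < S (k + 1) := by
    intro k hk
    apply div_lt_div_of_neg' hchiq
    exact_mod_cast hnumlt k hk
  -- S is strictly monotone on [0, n]
  have hlt : ∀ k l : ℕ, k < l → l ≤ n → S k < S l := by
    intro k l hkl hln
    induction l with
    | zero => omega
    | succ l ih =>
      rcases Nat.lt_or_ge k l with h | h
      · exact lt_trans (ih h (by omega)) (hstep l (by omega))
      · have : k = l := by omega
        subst this
        exact hstep k (by omega)
  have hSnonneg : ∀ k, k ≤ n → 0 ≤ S k := by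
    intro k hk
    rcases Nat.eq_zero_or_pos k with h | h
    · rw [h, hS0]
    · rw [← hS0]; exact le_of_lt (hlt 0 k h hk)
  have hSle1 : ∀ k, k ≤ n → S k ≤ 1 := by
    intro k hk
    rcases eq_or_lt_of_le hk with h | h
    · rw [h, hSn]
    · rw [← hSn]; exact le_of_lt (hlt k n h le_rfl)
  refine ⟨fun j => S (j.val + 1) - S j.val, ?_, ?_, ?_⟩
  · intro j
    dsimp only
    constructor
    · have := hstep j.val j.isLt
      linarith
    · by_cases h : j.val = 0
      · have h1 : S (j.val + 1) < 1 := by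
          rw [← hSn]; exact hlt (j.val + 1) n (by omega) le_rfl
        have h2 : 0 ≤ S j.val := hSnonneg _ (by omega)
        linarith
      · have h1 : S (j.val + 1) ≤ 1 := hSle1 _ (by omega)
        have h2 : 0 < S j.val := by
          rw [← hS0]; exact hlt 0 j.val (by omega) (by omega)
        linarith
  · rw [Fin.sum_univ_eq_sum_range (fun k => S (k + 1) - S k) n, Finset.sum_range_sub S,
      hS0, hSn]
    ring
  · intro i hi
    have hin : i.val + 1 < n := by omega
    have hT : ∑ j ∈ Finset.Iic i, (S (j.val + 1) - S j.val) = S (i.val + 1) := by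
      rw [sum_Iic_fin (fun k => S (k + 1) - S k) i, Finset.sum_range_sub S, hS0]
      ring
    have hTchi : (∑ j ∈ Finset.Iic i, (S (j.val + 1) - S j.val)) * (chi : ℚ)
        = (Q (i.val + 1) : ℚ) - (m : ℚ) * ((i.val : ℚ) + 1) := by
      rw [hT]
      simp only [hS_def, hnum_def, if_neg (by omega : i.val + 1 ≠ n)]
      rw [div_mul_cancel₀ _ hchiq0]
      push_cast
      ring
    have hP : ∑ j ∈ Finset.Iio i, (chiJ j : ℚ) = (Q i.val : ℚ) := by
      have : ∀ j ∈ Finset.Iio i, (chiJ j : ℚ) = ((c j.val : ℤ) : ℚ) := by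
        intro j _; rw [hc' j]
      rw [Finset.sum_congr rfl this, sum_Iio_fin (fun k => ((c k : ℤ) : ℚ)) i]
      simp only [hQ_def]
      push_cast
      rfl
    have hQs : (Q (i.val + 1) : ℚ) = (Q i.val : ℚ) + (chiJ i : ℚ) := by
      have := Finset.sum_range_succ c i.val
      rw [← hc' i]
      exact_mod_cast this
    have hmq : (0 : ℚ) < (m : ℚ) := by exact_mod_cast hm
    constructor
    · rw [hTchi, hP, hQs]; linarith
    · rw [hTchi, hP, hQs]; linarith
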